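/- For all α, β > 0 and s₁, s₂ ≥ 0, the vector χ = (1/(2(α+β))) · ( (s₂α−s₁β)/(2α), (s₁β−s₂α)/(2α), −(s₂α+s₁β)/(2β), (s₂α+s₁β)/(2β) ) is the unique vector in ℝ⁴ whose components sum to zero and which satisfies Q(α,β) χ = Λ 𝓔(α,β); moreover the resulting diffusion coefficient D := −(s₁χ₁ − s₁χ₂ + s₂χ₃ − s₂χ₄) equals (s₂²α² + s₁²β²)/(2(α+β)αβ), which is positive whenever (s₁,s₂) ≠ (0,0). -/

import Mathlib

/-- For all `α, β > 0` and `s₁, s₂ ≥ 0`, the explicit vector `χ` is the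
unique vector in `ℝ⁴` whose components sum to zero and which satisfies
`Q(α,β) χ = Λ 𝓔(α,β)` (with `Λ = diag(s₁,−s₁,s₂,−s₂)`); the resulting diffusion
coefficient `D = −(s₁χ₁ − s₁χ₂ + s₂χ₃ − s₂χ₄)` equals
`(s₂²α² + s₁²β²)/(2(α+β)αβ)`, which is positive whenever `(s₁,s₂) ≠ (0,0)`. -/
theorem ncs1_chi_and_diffusion (α β s₁ s₂ : ℝ) (hα : 0 < α) (hβ : 0 < β)
    (hs₁ : 0 ≤ s₁) (hs₂ : 0 ≤ s₂) :
    let Q : Matrix (Fin 4) (Fin 4) ℝ :=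
      !![-α, 0, 0, β;
         0, -α, β, 0;
         α, 0, -β, 0;
         0, α, 0, -β]
    let 𝓔 : Fin 4 → ℝ := (2 * (α + β))⁻¹ • ![β, β, α, α]
    let Λ𝓔 : Fin 4 → ℝ := ![s₁ * 𝓔 0, -(s₁ * 𝓔 1), s₂ * 𝓔 2, -(s₂ * 𝓔 3)]
    let χ : Fin 4 → ℝ := (2 * (α + β))⁻¹ •
      ![(s₂ * α - s₁ * β) / (2 * α),
        (s₁ * β - s₂ * α) / (2 * α),
        -((s₂ * α + s₁ * β) / (2 * β)),
        (s₂ * α + s₁ * β) / (2 * β)]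
    (χ 0 + χ 1 + χ 2 + χ 3 = 0) ∧
    Q.mulVec χ = Λ𝓔 ∧
    (∀ y : Fin 4 → ℝ, y 0 + y 1 + y 2 + y 3 = 0 → Q.mulVec y = Λ𝓔 → y = χ) ∧
    -(s₁ * χ 0 - s₁ * χ 1 + s₂ * χ 2 - s₂ * χ 3)
      = (s₂ ^ 2 * α ^ 2 + s₁ ^ 2 * β ^ 2) / (2 * (α + β) * α * β) ∧
    ((s₁, s₂) ≠ (0, 0) →
      0 < (s₂ ^ 2 * α ^ 2 + s₁ ^ 2 * β ^ 2) / (2 * (α + β) * α * β)) := by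
  intro Q 𝓔 Λ𝓔 χ
  have hα' := hα.ne'
  have hβ' := hβ.ne'
  have hab : (α + β) ≠ 0 := by positivity
  refine ⟨?_, ?_, ?_, ?_, ?_⟩
  · simp only [χ, Pi.smul_apply, Matrix.cons_val_zero, Matrix.cons_val_one, Matrix.head_cons,
      Matrix.cons_val_two, Matrix.cons_val_three, Matrix.tail_cons, smul_eq_mul]
    field_simp
    ring
  · funext i
    fin_cases i <;>
      simp [Q, χ, Λ𝓔, 𝓔, Matrix.mulVec, dotProduct, Fin.sum_univ_four] <;>
      field_simp <;> ring
  · intro y hsum hQ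
    have h0 := congrFun hQ 0
    have h1 := congrFun hQ 1
    have h2 := congrFun hQ 2
    have h3 := congrFun hQ 3
    simp only [Q, Λ𝓔, 𝓔, Matrix.mulVec, dotProduct, Fin.sum_univ_four,
      Pi.smul_apply, smul_eq_mul, Matrix.cons_val', Matrix.cons_val_zero, Matrix.cons_val_one,
      Matrix.head_cons, Matrix.cons_val_two, Matrix.cons_val_three, Matrix.tail_cons,
      Matrix.empty_val', Matrix.cons_val_fin_one, Matrix.head_fin_const, Matrix.of_apply] at h0 h1 h2 h3
    field_simp at h0 h1 h2 h3
    have key0 : y 0 * (4 * α * (α + β) ^ 2) = (s₂ * α - s₁ * β) * (α + β) := by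
      linear_combination (-(α + β)) * h0 + α * h2 + (-β) * h3 + (2 * α * β * (α + β)) * hsum
    have key1 : y 1 * (4 * α * (α + β) ^ 2) = (s₁ * β - s₂ * α) * (α + β) := by
      linear_combination (α + β) * h0 + α * h2 + (2 * (α + β) - β) * h3 + (2 * α * β * (α + β)) * hsum
    have key2 : y 2 * (4 * β * (α + β) ^ 2) = -((s₂ * α + s₁ * β)) * (α + β) := by
      linear_combination (-(α + β)) * h0 + (α - 2 * (α + β)) * h2 + (-β) * h3 + (2 * α * β * (α + β)) * hsum
    have key3 : y 3 * (4 * β * (α + β) ^ 2) = (s₂ * α + s₁ * β) * (α + β) := by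
      linear_combination (α + β) * h0 + α * h2 + (-β) * h3 + (2 * α * β * (α + β)) * hsum
    have e0 : y 0 = χ 0 := by
      simp only [χ, Pi.smul_apply, smul_eq_mul, Matrix.cons_val_zero]
      field_simp
      exact mul_right_cancel₀ hab (by linear_combination key0)
    have e1 : y 1 = χ 1 := by
      simp only [χ, Pi.smul_apply, smul_eq_mul, Matrix.cons_val_one, Matrix.head_cons,
        Matrix.cons_val_zero]
      field_simp
      exact mul_right_cancel₀ hab (by linear_combination key1)
    have e2 : y 2 = χ 2 := by
      simp only [χ, Pi.smul_apply, smul_eq_mul, Matrix.cons_val_two, Matrix.tail_cons,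
        Matrix.head_cons]
      field_simp
      exact mul_right_cancel₀ hab (by linear_combination key2)
    have e3 : y 3 = χ 3 := by
      simp only [χ, Pi.smul_apply, smul_eq_mul, Matrix.cons_val_three, Matrix.tail_cons,
        Matrix.head_cons]
      field_simp
      exact mul_right_cancel₀ hab (by linear_combination key3)
    funext i
    fin_cases i
    · exact e0
    · exact e1
    · exact e2
    · exact e3
  · simp only [χ, Pi.smul_apply, smul_eq_mul, Matrix.cons_val_zero, Matrix.cons_val_one,
      Matrix.head_cons, Matrix.cons_val_two, Matrix.cons_val_three, Matrix.tail_cons]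
    field_simp
    ring
  · intro hne
    have h : ¬(s₁ = 0 ∧ s₂ = 0) := by simpa [Prod.ext_iff] using hne
    have : 0 < s₂ ^ 2 * α ^ 2 + s₁ ^ 2 * β ^ 2 := by
      rcases eq_or_lt_of_le hs₁ with h1 | h1
      · rcases eq_or_lt_of_le hs₂ with h2 | h2
        · exact absurd ⟨h1.symm, h2.symm⟩ h
        · positivity
      · positivity
    positivity
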